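/- Let R be a ring, A a right ideal of R, and (A_1, …, A_n) an n-tuple of proper right ideals of R with A_iA_j = A_jA_i for every i, j = 1, …, n. Then the following are equivalent: (1) A = A_1⋯A_n and the family {A_1, …, A_n} is coindependent; (2) the assignment r + A ↦ (r + A_1, …, r + A_n), for r ∈ R, is a well-defined bijective right R-module homomorphism R/A → R/A_1 ⊕ ⋯ ⊕ R/A_n. -/

import Mathlib

open MulOpposite

universe u

/-- The product `A·B` of two right ideals of `R` (right ideals are `Rᵐᵒᵖ`-submodules of `R`):
the set of all finite sums of products `a * b` with `a ∈ A`, `b ∈ B`. -/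
def rmul {R : Type u} [Ring R] (A B : Submodule Rᵐᵒᵖ R) : Submodule Rᵐᵒᵖ R :=
  Submodule.span Rᵐᵒᵖ {x : R | ∃ a ∈ A, ∃ b ∈ B, x = a * b}

/-- The product `A₁⋯Aₙ` of a (possibly empty) list of right ideals. -/
def rprod {R : Type u} [Ring R] : List (Submodule Rᵐᵒᵖ R) → Submodule Rᵐᵒᵖ R
  | [] => ⊤
  | [A] => A
  | A :: l => rmul A (rprod l)

/-- A finite family of right ideals is coindependent if `Aᵢ + ⋂_{j ≠ i} Aⱼ = R` for every `i`. -/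
def Coindep {R : Type u} [Ring R] {n : ℕ} (A : Fin n → Submodule Rᵐᵒᵖ R) : Prop :=
  ∀ i, A i ⊔ (⨅ j, ⨅ (_ : j ≠ i), A j) = ⊤

/-- A module is uniserial if its submodules are linearly ordered by inclusion. -/
def IsUniserialMod (S : Type*) [Ring S] (M : Type*) [AddCommGroup M] [Module S M] : Prop :=
  ∀ N P : Submodule S M, N ≤ P ∨ P ≤ N

/-- A right ideal is a two-sided ideal if it is also closed under left multiplication. -/
def IsTwoSidedRid {R : Type u} [Ring R] (A : Submodule Rᵐᵒᵖ R) : Prop :=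
  ∀ (r : R), ∀ x ∈ A, r * x ∈ A

/-- A serial factorization of a right ideal `A`: a factorization `A = A₁⋯Aₙ` into proper
right ideals that pairwise commute, form a coindependent family, and are such that every
quotient `R/Aᵢ` is a uniserial right `R`-module. -/
def IsSerialFact {R : Type u} [Ring R] {n : ℕ} (A : Submodule Rᵐᵒᵖ R)
    (F : Fin n → Submodule Rᵐᵒᵖ R) : Prop :=
  (∀ i, F i ≠ ⊤) ∧ (∀ i j, rmul (F i) (F j) = rmul (F j) (F i)) ∧ Coindep F ∧
    (∀ i, IsUniserialMod Rᵐᵒᵖ (R ⧸ F i)) ∧ A = rprod (List.ofFn F)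

/-- A right ideal has a serial factorization if it admits one of some length. -/
def HasSerialFact {R : Type u} [Ring R] (A : Submodule Rᵐᵒᵖ R) : Prop :=
  ∃ (n : ℕ) (F : Fin n → Submodule Rᵐᵒᵖ R), IsSerialFact A F

/-- A right chain ring: its right ideals are linearly ordered by inclusion. -/
def IsRightChainRing (R : Type u) [Ring R] : Prop :=
  ∀ A B : Submodule Rᵐᵒᵖ R, A ≤ B ∨ B ≤ A

/-- A ring is right duo if every right ideal is a two-sided ideal. -/
def IsRightDuo (R : Type u) [Ring R] : Prop :=
  ∀ A : Submodule Rᵐᵒᵖ R, IsTwoSidedRid A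

/-- The principal right ideal `rR`. -/
def rspan {R : Type u} [Ring R] (r : R) : Submodule Rᵐᵒᵖ R :=
  Submodule.span Rᵐᵒᵖ ({r} : Set R)

section aux
variable {R : Type u} [Ring R]

lemma mem_rmul {A B : Submodule Rᵐᵒᵖ R} {a b : R} (ha : a ∈ A) (hb : b ∈ B) :
    a * b ∈ rmul A B :=
  Submodule.subset_span ⟨a, ha, b, hb, rfl⟩

lemma rmul_le {A B T : Submodule Rᵐᵒᵖ R}
    (h : ∀ a ∈ A, ∀ b ∈ B, a * b ∈ T) : rmul A B ≤ T := by
  rw [rmul, Submodule.span_le]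
  rintro x ⟨a, ha, b, hb, rfl⟩
  exact h a ha b hb

lemma rmul_le_left (A B : Submodule Rᵐᵒᵖ R) : rmul A B ≤ A := by
  apply rmul_le
  intro a ha b _
  simpa [op_smul_eq_mul] using A.smul_mem (op b) ha

lemma rmul_assoc (A B C : Submodule Rᵐᵒᵖ R) :
    rmul (rmul A B) C = rmul A (rmul B C) := by
  apply le_antisymm
  · apply rmul_le
    intro y hy c hc
    have key : ∀ s : R, y * s * c ∈ rmul A (rmul B C) := by
      induction hy using Submodule.span_induction with
      | mem x hx =>
        obtain ⟨a, ha, b, hb, rfl⟩ := hx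
        intro s
        rw [mul_assoc, mul_assoc, ← mul_assoc b s c]
        have hbs : b * s ∈ B := by simpa [op_smul_eq_mul] using B.smul_mem (op s) hb
        exact mem_rmul ha (mem_rmul hbs hc)
      | zero => intro s; simpa using (rmul A (rmul B C)).zero_mem
      | add x y _ _ hx hy => intro s; rw [add_mul, add_mul]; exact add_mem (hx s) (hy s)
      | smul r x _ hx =>
        intro s
        rw [MulOpposite.smul_eq_mul_unop]
        simpa [mul_assoc] using hx (r.unop * s)
    simpa using key 1
  · apply rmul_le
    intro a ha y hy
    induction hy using Submodule.span_induction with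
    | mem x hx =>
      obtain ⟨b, hb, c, hc, rfl⟩ := hx
      rw [← mul_assoc]
      exact mem_rmul (mem_rmul ha hb) hc
    | zero => simpa using (rmul (rmul A B) C).zero_mem
    | add x y _ _ hx hy => rw [mul_add]; exact add_mem hx hy
    | smul r x _ hx =>
      rw [MulOpposite.smul_eq_mul_unop, ← mul_assoc, ← MulOpposite.smul_eq_mul_unop]
      exact (rmul (rmul A B) C).smul_mem r hx
end aux

section aux2
variable {R : Type u} [Ring R]

lemma top_of_one_mem {S : Submodule Rᵐᵒᵖ R} (h : (1:R) ∈ S) : S = ⊤ := by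
  rw [eq_top_iff]
  intro x _
  simpa [op_smul_eq_mul] using S.smul_mem (op x) h

lemma inf_eq_rmul {A B : Submodule Rᵐᵒᵖ R} (hsup : A ⊔ B = ⊤)
    (hc : rmul A B = rmul B A) : A ⊓ B = rmul A B := by
  apply le_antisymm
  · intro x hx
    obtain ⟨a, ha, b, hb, hab⟩ := Submodule.mem_sup.mp
      (hsup ▸ Submodule.mem_top : (1:R) ∈ A ⊔ B)
    have hx1 : x = a * x + b * x := by rw [← add_mul, hab, one_mul]
    rw [hx1]
    exact add_mem (mem_rmul ha hx.2) (hc ▸ mem_rmul hb hx.1)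
  · exact le_inf (rmul_le_left A B) (hc ▸ rmul_le_left B A)

lemma rprod_cons (A : Submodule Rᵐᵒᵖ R) (l : List (Submodule Rᵐᵒᵖ R)) (h : l ≠ []) :
    rprod (A :: l) = rmul A (rprod l) := by
  cases l with
  | nil => simp at h
  | cons B t => rfl

lemma rmul_rprod_comm (B : Submodule Rᵐᵒᵖ R) (l : List (Submodule Rᵐᵒᵖ R)) (hl : l ≠ [])
    (h : ∀ C ∈ l, rmul B C = rmul C B) : rmul B (rprod l) = rmul (rprod l) B := by
  induction l with
  | nil => simp at hl
  | cons C t ih =>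
    cases t with
    | nil => exact h C (by simp)
    | cons D t' =>
      rw [rprod_cons C _ (by simp)]
      have hC := h C (by simp)
      have ht := ih (by simp) (fun X hX => h X (List.mem_cons_of_mem _ hX))
      rw [← rmul_assoc, hC, rmul_assoc, ht, ← rmul_assoc]

lemma rprod_eq_iInf : ∀ {n : ℕ} (F : Fin n → Submodule Rᵐᵒᵖ R),
    (∀ i j, rmul (F i) (F j) = rmul (F j) (F i)) → Coindep F →
    rprod (List.ofFn F) = ⨅ i, F i := by
  intro n
  induction n with
  | zero =>
    intro F _ _
    rw [List.ofFn_zero, show rprod ([] : List (Submodule Rᵐᵒᵖ R)) = ⊤ from rfl]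
    exact (iInf_of_empty F).symm
  | succ m ih =>
    intro F hcomm hco
    cases m with
    | zero =>
      simp only [List.ofFn_succ, List.ofFn_zero]
      have : ⨅ i, F i = F 0 := by
        apply le_antisymm (iInf_le _ 0)
        intro x hx
        rw [Submodule.mem_iInf]
        intro i
        rw [Fin.fin_one_eq_zero i]; exact hx
      rw [this]
      rfl
    | succ k =>
      set G : Fin (k+1) → Submodule Rᵐᵒᵖ R := fun j => F j.succ with hG
      have hGcomm : ∀ i j, rmul (G i) (G j) = rmul (G j) (G i) := fun i j => hcomm _ _
      have hGco : Coindep G := by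
        intro i
        rw [eq_top_iff, ← hco i.succ]
        apply sup_le_sup_left
        apply le_iInf; intro j; apply le_iInf; intro hj
        exact iInf_le_of_le j.succ (iInf_le_of_le (fun hc => hj (Fin.succ_injective _ hc)) le_rfl)
      have hIH := ih G hGcomm hGco
      have hofn : List.ofFn F = F 0 :: List.ofFn G := by
        rw [List.ofFn_succ]
      rw [hofn, rprod_cons _ _ (by simp [List.ofFn_succ]), hIH]
      have hsup : F 0 ⊔ (⨅ j, G j) = ⊤ := by
        rw [eq_top_iff, ← hco 0]
        apply sup_le_sup_left
        apply le_iInf; intro j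
        exact iInf_le_of_le j.succ (iInf_le_of_le (by simp [Fin.succ_ne_zero]) le_rfl)
      have hc : rmul (F 0) (⨅ j, G j) = rmul (⨅ j, G j) (F 0) := by
        rw [← hIH]
        exact rmul_rprod_comm _ _ (by simp [List.ofFn_succ])
          (by intro C hC; obtain ⟨j, rfl⟩ := List.mem_ofFn.mp hC; exact (hcomm _ _))
      rw [← inf_eq_rmul hsup hc]
      apply le_antisymm
      · apply le_iInf; intro i
        rcases Fin.eq_zero_or_eq_succ i with h0 | ⟨j, rfl⟩
        · rw [h0]; exact inf_le_left
        · exact le_trans inf_le_right (iInf_le _ j)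
      · exact le_inf (iInf_le _ 0) (le_iInf fun j => iInf_le _ j.succ)

end aux2

section aux3
variable {R : Type u} [Ring R] {n : ℕ}

lemma pi_mkQ_surjective (F : Fin n → Submodule Rᵐᵒᵖ R) (hco : Coindep F) :
    Function.Surjective
      (LinearMap.pi (fun i => (F i).mkQ) : R →ₗ[Rᵐᵒᵖ] ((i : Fin n) → R ⧸ F i)) := by
  intro y
  choose r hr using fun i => Submodule.Quotient.mk_surjective (F i) (y i)
  have he : ∀ i : Fin n, ∃ e : R, (1 - e) ∈ F i ∧ ∀ j, j ≠ i → e ∈ F j := by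
    intro i
    obtain ⟨a, ha, e, hein, hae⟩ := Submodule.mem_sup.mp
      ((hco i) ▸ Submodule.mem_top : (1:R) ∈ F i ⊔ _)
    refine ⟨e, ?_, ?_⟩
    · rw [← hae]; simpa using ha
    · intro j hj
      exact (Submodule.mem_iInf _).mp ((Submodule.mem_iInf _).mp hein j) hj
  choose e he1 he2 using he
  refine ⟨∑ i, e i * r i, ?_⟩
  funext i
  simp only [LinearMap.pi_apply, Submodule.mkQ_apply]
  rw [← hr i, Submodule.Quotient.eq]
  have hsplit : (∑ j, e j * r j) - r i
      = (∑ j ∈ Finset.univ.erase i, e j * r j) + ((e i - 1) * r i) := by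
    rw [← Finset.sum_erase_add _ _ (Finset.mem_univ i)]
    rw [sub_mul, one_mul, add_sub_assoc]
  rw [hsplit]
  apply add_mem
  · apply Submodule.sum_mem
    intro j hj
    have hji : j ≠ i := (Finset.mem_erase.mp hj).1
    simpa [op_smul_eq_mul] using (F i).smul_mem (op (r j)) (he2 j i (Ne.symm hji))
  · have : e i - 1 ∈ F i := by simpa using (F i).neg_mem (he1 i)
    simpa [op_smul_eq_mul] using (F i).smul_mem (op (r i)) this
end aux3


/-- Proposition 2: for pairwise commuting proper right ideals `A₁, …, Aₙ`, one has
`A = A₁⋯Aₙ` with `{A₁, …, Aₙ}` coindependent iff the assignment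
`r + A ↦ (r + A₁, …, r + Aₙ)` is a well-defined bijective right `R`-module homomorphism
`R/A → R/A₁ ⊕ ⋯ ⊕ R/Aₙ`. -/
theorem statement3 {R : Type u} [Ring R] [Nontrivial R] {n : ℕ}
    (A : Submodule Rᵐᵒᵖ R) (F : Fin n → Submodule Rᵐᵒᵖ R)
    (hproper : ∀ i, F i ≠ ⊤)
    (hcomm : ∀ i j, rmul (F i) (F j) = rmul (F j) (F i)) :
    (A = rprod (List.ofFn F) ∧ Coindep F) ↔
      ∃ f : (R ⧸ A) →ₗ[Rᵐᵒᵖ] ((i : Fin n) → R ⧸ F i),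
        Function.Bijective f ∧
          ∀ r : R, f (Submodule.Quotient.mk r) = fun i => Submodule.Quotient.mk r := by
  constructor
  · rintro ⟨hA, hco⟩
    have hAinf : A = ⨅ i, F i := by rw [hA, rprod_eq_iInf F hcomm hco]
    set π : R →ₗ[Rᵐᵒᵖ] ((i : Fin n) → R ⧸ F i) := LinearMap.pi (fun i => (F i).mkQ) with hπ
    have hker : LinearMap.ker π = A := by
      rw [hAinf, hπ, LinearMap.ker_pi]
      simp [Submodule.ker_mkQ]
    refine ⟨A.liftQ π hker.ge, ⟨?_, ?_⟩, ?_⟩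
    · rw [← LinearMap.ker_eq_bot, Submodule.ker_liftQ_eq_bot]
      exact hker.le
    · intro y
      obtain ⟨x, hx⟩ := pi_mkQ_surjective F hco y
      exact ⟨Submodule.Quotient.mk x, by rw [Submodule.liftQ_apply]; exact hx⟩
    · intro r
      rw [Submodule.liftQ_apply]
      rfl
  · rintro ⟨f, ⟨hinj, hsurj⟩, hf⟩
    have hAinf : A = ⨅ i, F i := by
      apply le_antisymm
      · intro x hx
        rw [Submodule.mem_iInf]
        intro i
        have h0 : (Submodule.Quotient.mk x : R ⧸ A) = 0 :=
          (Submodule.Quotient.mk_eq_zero _).mpr hx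
        have := hf x
        rw [h0, map_zero] at this
        have := congrFun this.symm i
        exact (Submodule.Quotient.mk_eq_zero _).mp this
      · intro x hx
        rw [Submodule.mem_iInf] at hx
        have h0 : f (Submodule.Quotient.mk x) = 0 := by
          rw [hf x]
          funext i
          exact (Submodule.Quotient.mk_eq_zero _).mpr (hx i)
        rw [← map_zero f] at h0
        have := hinj h0
        exact (Submodule.Quotient.mk_eq_zero _).mp this
    have hco : Coindep F := by
      intro i
      obtain ⟨q, hq⟩ := hsurj (fun j => Submodule.Quotient.mk (if j = i then 0 else 1))
      obtain ⟨x, rfl⟩ := Submodule.Quotient.mk_surjective A q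
      rw [hf x] at hq
      have hxi : x ∈ F i := by
        have := congrFun hq i
        simp only [if_pos rfl] at this
        simpa using (Submodule.Quotient.eq _).mp this
      have hx1 : ∀ j, j ≠ i → (1 : R) - x ∈ F j := by
        intro j hj
        have := congrFun hq j
        rw [if_neg hj] at this
        have hmem : x - 1 ∈ F j := (Submodule.Quotient.eq _).mp this
        simpa [neg_sub] using (F j).neg_mem hmem
      apply top_of_one_mem
      have : (1 : R) = x + (1 - x) := by abel
      rw [this]
      refine Submodule.add_mem_sup hxi ?_
      rw [Submodule.mem_iInf]
      intro j
      rw [Submodule.mem_iInf]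
      intro hj
      exact hx1 j hj
    exact ⟨by rw [rprod_eq_iInf F hcomm hco, ← hAinf], hco⟩
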